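/- The price of 1/2-MMS for unscaled additive valuations is Ω(n): for every ε ∈ (0,1), in the instance with n agents and n goods where agent 1 values each good at 1 and every other agent values each good at ε, every 1/2-MMS allocation assigns at least one good to every agent and hence has social welfare at most 1 + (n−1)·ε + (something ≤ 0), while the optimal social welfare is n; thus the ratio is at least n/(1+(n−1)ε). -/

import Mathlib

open Finset

/-- `MMSval v k G` is the maximin share value: the supremum over all partitions of `G`
into `k` bundles of the minimum bundle value under the additive valuation with item
values `v`. -/
noncomputable def MMSval {m : ℕ} (v : Fin m → ℝ) (k : ℕ) (G : Finset (Fin m)) : ℝ :=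
  ⨆ P : {P : Fin k → Finset (Fin m) //
      (∀ a b : Fin k, a ≠ b → Disjoint (P a) (P b)) ∧ Finset.univ.biUnion P = G},
    ⨅ j : Fin k, ∑ g ∈ P.1 j, v g

/-- With `n` goods and a constant nonnegative item value `c`, the MMS value for `n`
agents is at least `c` (via the partition into singletons). -/
lemma mms_ge_const (n : ℕ) (hn : 1 ≤ n) (c : ℝ) (hc : 0 ≤ c) (v : Fin n → ℝ)
    (hvc : ∀ g, v g = c) : c ≤ MMSval v n Finset.univ := by
  have hne : Nonempty (Fin n) := ⟨⟨0, hn⟩⟩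
  set S : Type := {P : Fin n → Finset (Fin n) //
      (∀ a b : Fin n, a ≠ b → Disjoint (P a) (P b)) ∧
        Finset.univ.biUnion P = Finset.univ} with hS
  have hPmem : ((fun g : Fin n => ({g} : Finset (Fin n)))) ∈
      {P : Fin n → Finset (Fin n) | (∀ a b : Fin n, a ≠ b → Disjoint (P a) (P b)) ∧
        Finset.univ.biUnion P = Finset.univ} := by
    constructor
    · intro a b hab
      simpa [Finset.disjoint_singleton_left] using hab
    · ext g; simp
  let P0 : S := ⟨fun g => {g}, hPmem⟩
  have hbdd : BddAbove (Set.range fun P : S => ⨅ j : Fin n, ∑ g ∈ P.1 j, v g) := by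
    refine ⟨(n : ℝ) * c, ?_⟩
    rintro x ⟨P, rfl⟩
    have h1 : (⨅ j : Fin n, ∑ g ∈ P.1 j, v g) ≤ ∑ g ∈ P.1 ⟨0, hn⟩, v g :=
      ciInf_le (Finite.bddBelow_range _) _
    refine h1.trans ?_
    have : ∑ g ∈ P.1 ⟨0, hn⟩, v g ≤ ∑ g : Fin n, v g := by
      apply Finset.sum_le_sum_of_subset_of_nonneg (Finset.subset_univ _)
      intro g _ _; rw [hvc g]; exact hc
    refine this.trans ?_
    simp [hvc, mul_comm]
  have h := le_ciSup hbdd P0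
  refine le_trans ?_ h
  have : (⨅ j : Fin n, ∑ g ∈ P0.1 j, v g) = c := by
    have : ∀ j : Fin n, ∑ g ∈ P0.1 j, v g = c := by
      intro j; simp [P0, hvc]
    simp [this]
  rw [this]

/-- Price of 1/2-MMS for unscaled additive valuations is Ω(n). In the
instance with `n` agents and `n` goods where agent 1 (index 0) values each good at `1`
and every other agent values each good at `ε ∈ (0,1)`, every 1/2-MMS allocation gives
every agent a nonempty bundle and has social welfare at most `1 + (n−1)·ε`, while the
optimal social welfare is `n` (all goods to agent 1). -/
theorem price_of_half_mms_unscaled_lower_bound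
    (n : ℕ) (hn : 1 ≤ n) (ε : ℝ) (hε : 0 < ε) (hε1 : ε < 1)
    (v : Fin n → Fin n → ℝ)
    (hv : ∀ i g, v i g = if (i : ℕ) = 0 then 1 else ε) :
    (∑ g : Fin n, v ⟨0, hn⟩ g = (n : ℝ)) ∧
    (∀ B : Fin n → Finset (Fin n),
      (∀ a b : Fin n, a ≠ b → Disjoint (B a) (B b)) →
      Finset.univ.biUnion B = Finset.univ →
      (∀ i : Fin n, (1 / 2) * MMSval (v i) n Finset.univ ≤ ∑ g ∈ B i, v i g) →
      (∀ i : Fin n, (B i).Nonempty) ∧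
        ∑ i, ∑ g ∈ B i, v i g ≤ 1 + ((n : ℝ) - 1) * ε) := by
  constructor
  · simp [hv]
  intro B hdisj hcover hmms
  -- the constant value of agent i
  set c : Fin n → ℝ := fun i => if (i : ℕ) = 0 then 1 else ε with hc
  have hcpos : ∀ i, 0 < c i := by
    intro i; by_cases h : (i : ℕ) = 0 <;> simp [hc, h, hε]
  have hvc : ∀ i g, v i g = c i := fun i g => hv i g
  -- each bundle nonempty
  have hnonempty : ∀ i : Fin n, (B i).Nonempty := by
    intro i
    have hmge : c i ≤ MMSval (v i) n Finset.univ :=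
      mms_ge_const n hn (c i) (hcpos i).le (v i) (hvc i)
    have hsum : (1 / 2) * c i ≤ ∑ g ∈ B i, v i g := by
      refine le_trans ?_ (hmms i)
      have := hmge
      nlinarith [hcpos i]
    rcases Finset.eq_empty_or_nonempty (B i) with h | h
    · exfalso
      rw [h] at hsum
      simp at hsum
      nlinarith [hcpos i]
    · exact h
  refine ⟨hnonempty, ?_⟩
  -- sum of cards = n
  have hcard : ∑ i, (B i).card = n := by
    have := Finset.card_biUnion (s := (Finset.univ : Finset (Fin n))) (t := B)
      (fun a _ b _ hab => hdisj a b hab)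
    rw [hcover] at this
    simpa using this.symm
  have hcard1 : ∀ i, (B i).card = 1 := by
    intro i
    have hge : 1 ≤ (B i).card := Finset.card_pos.mpr (hnonempty i)
    have hle : (B i).card ≤ 1 := by
      by_contra h
      push_neg at h
      have h2 : 2 ≤ (B i).card := h
      have hrest : (n : ℕ) - 1 ≤ ∑ j ∈ Finset.univ.erase i, (B j).card := by
        calc (n : ℕ) - 1 = ∑ _j ∈ Finset.univ.erase i, 1 := by simp
          _ ≤ ∑ j ∈ Finset.univ.erase i, (B j).card :=
              Finset.sum_le_sum fun j _ => Finset.card_pos.mpr (hnonempty j)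
      have htot : (B i).card + ∑ j ∈ Finset.univ.erase i, (B j).card = n := by
        rw [Finset.add_sum_erase _ (fun j => (B j).card) (Finset.mem_univ i)]
        exact hcard
      omega
    omega
  -- compute welfare
  have hwelf : ∑ i, ∑ g ∈ B i, v i g = ∑ i, c i := by
    apply Finset.sum_congr rfl
    intro i _
    rw [Finset.sum_congr rfl (fun g _ => hvc i g), Finset.sum_const, hcard1 i]
    simp
  rw [hwelf]
  have : ∑ i : Fin n, c i = 1 + ((n : ℝ) - 1) * ε := by
    have h0 : (⟨0, hn⟩ : Fin n) ∈ Finset.univ := Finset.mem_univ _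
    rw [← Finset.add_sum_erase Finset.univ c h0]
    have h1 : c ⟨0, hn⟩ = 1 := by simp [hc]
    have h2 : ∑ i ∈ Finset.univ.erase (⟨0, hn⟩ : Fin n), c i =
        ((n : ℝ) - 1) * ε := by
      have : ∀ i ∈ Finset.univ.erase (⟨0, hn⟩ : Fin n), c i = ε := by
        intro i hi
        have : i ≠ ⟨0, hn⟩ := (Finset.mem_erase.mp hi).1
        have hi0 : (i : ℕ) ≠ 0 := by
          intro h
          exact this (Fin.ext h)
        simp [hc, hi0]
      rw [Finset.sum_congr rfl this, Finset.sum_const, Finset.card_erase_of_mem h0]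
      have : ((n - 1 : ℕ) : ℝ) = (n : ℝ) - 1 := by
        push_cast [Nat.cast_sub hn]; ring
      simp [nsmul_eq_mul, this]
    rw [h1, h2]
  linarith [this.le]
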